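/- Variance of the RS+FD[OUE-r] estimator (Theorem 'variance_oue_r'): let d ≥ 1 and c ≥ 2 be integers, p, q ∈ [0,1] with p ≠ q, let n be a positive integer, let 0 ≤ f ≤ 1, and set γ = (1/d)·(q + f·(p−q) + ((d−1)/c)·(p + (c−1)·q)) (the marginal probability that a user reports bit 1 for v when each user independently holds v with probability f under the RS+FD[OUE-r] mechanism). If N is the sum of n i.i.d. Bernoulli(γ) indicator random variables, then the estimator f̂ = (N·d·c − n·(q·c + (p−q)·(d−1) + q·c·(d−1)))/(n·c·(p−q)) has variance Var(f̂) = d²·γ·(1−γ)/(n·(p−q)²). -/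

import Mathlib

open MeasureTheory ProbabilityTheory

lemma my_variance_add_const {Ω : Type*} [MeasureSpace Ω] [IsProbabilityMeasure (ℙ : Measure Ω)]
    (Z : Ω → ℝ) (hZ : Integrable Z ℙ) (b : ℝ) :
    variance (fun ω => Z ω + b) ℙ = variance Z ℙ := by
  unfold variance evariance
  congr 1
  have h : (ℙ : Measure Ω)[fun ω => Z ω + b] = (ℙ : Measure Ω)[Z] + b := by
    rw [integral_add hZ (integrable_const b), integral_const]
    simp
  refine lintegral_congr fun ω => ?_
  rw [h]
  ring_nf

/-- Variance of the RS+FD[OUE-r] estimator (Theorem `variance_oue_r`). -/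
theorem variance_oue_r
    {Ω : Type*} [MeasureSpace Ω] [IsProbabilityMeasure (ℙ : Measure Ω)]
    (d c : ℕ) (hd : 1 ≤ d) (hc : 2 ≤ c)
    (p q : ℝ) (hp : 0 ≤ p ∧ p ≤ 1) (hq : 0 ≤ q ∧ q ≤ 1) (hpq : p ≠ q)
    (n : ℕ) (hn : 0 < n)
    (f : ℝ) (hf0 : 0 ≤ f) (hf1 : f ≤ 1)
    (γ : ℝ)
    (hγ : γ = (1 / (d : ℝ)) * (q + f * (p - q)
        + (((d : ℝ) - 1) / (c : ℝ)) * (p + ((c : ℝ) - 1) * q)))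
    (X : Fin n → Ω → Bool)
    (hmeas : ∀ i, Measurable (X i))
    (hindep : iIndepFun X ℙ)
    (hbern : ∀ i, ℙ {ω | X i ω = true} = ENNReal.ofReal γ) :
    variance (fun ω =>
        ((∑ i, if X i ω then (1 : ℝ) else 0) * (d : ℝ) * (c : ℝ)
          - (n : ℝ) * (q * (c : ℝ) + (p - q) * ((d : ℝ) - 1) + q * (c : ℝ) * ((d : ℝ) - 1)))
          / ((n : ℝ) * (c : ℝ) * (p - q))) ℙ
      = (d : ℝ) ^ 2 * γ * (1 - γ) / ((n : ℝ) * (p - q) ^ 2) := by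
  have hd1 : (1 : ℝ) ≤ (d : ℝ) := by exact_mod_cast hd
  have hc2 : (2 : ℝ) ≤ (c : ℝ) := by exact_mod_cast hc
  have hn0 : (0 : ℝ) < (n : ℝ) := by exact_mod_cast hn
  have hdpos : (0 : ℝ) < (d : ℝ) := by linarith
  have hcpos : (0 : ℝ) < (c : ℝ) := by linarith
  have hpq' : p - q ≠ 0 := sub_ne_zero.mpr hpq
  -- γ ≥ 0
  have hγ0 : 0 ≤ γ := by
    rw [hγ]
    have h1 : 0 ≤ q + f * (p - q) := by nlinarith [hp.1, hq.1]
    have h2 : 0 ≤ ((d : ℝ) - 1) / (c : ℝ) := div_nonneg (by linarith) (by linarith)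
    have h3 : 0 ≤ p + ((c : ℝ) - 1) * q := by nlinarith [hp.1, hq.1]
    have h4 := mul_nonneg h2 h3
    have h5 : (0:ℝ) ≤ 1 / (d:ℝ) := by positivity
    nlinarith
  set Y : Fin n → Ω → ℝ := fun i ω => if X i ω then (1 : ℝ) else 0 with hY
  have hYind : ∀ i, Y i = ({ω | X i ω = true}).indicator (fun _ => (1 : ℝ)) := by
    intro i
    funext ω
    by_cases h : X i ω <;> simp [hY, h, Set.indicator]
  have hsetmeas : ∀ i, MeasurableSet {ω | X i ω = true} := fun i =>
    (hmeas i) (measurableSet_singleton true)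
  have hYmeas : ∀ i, Measurable (Y i) := by
    intro i
    rw [hYind i]
    exact (measurable_const.indicator (hsetmeas i))
  have hYbdd : ∀ i, ∀ ω, Y i ω ∈ Set.Icc (0 : ℝ) 1 := by
    intro i ω
    by_cases h : X i ω <;> simp [hY, h]
  have hYmem : ∀ i, MemLp (Y i) 2 ℙ := fun i =>
    memLp_of_bounded (Filter.Eventually.of_forall (hYbdd i))
      (hYmeas i).aestronglyMeasurable 2
  have hEY : ∀ i, (ℙ : Measure Ω)[Y i] = γ := by
    intro i
    rw [hYind i]
    rw [show ({ω | X i ω = true}).indicator (fun _ => (1:ℝ)) = ({ω | X i ω = true}).indicator 1 from rfl]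
    rw [integral_indicator_one (hsetmeas i), measureReal_def, hbern i, ENNReal.toReal_ofReal hγ0]
  have hYsq : ∀ i, (fun ω => Y i ω ^ 2) = Y i := by
    intro i
    funext ω
    by_cases h : X i ω <;> simp [hY, h]
  have hVarY : ∀ i, variance (Y i) ℙ = γ - γ ^ 2 := by
    intro i
    rw [variance_eq_sub (hYmem i)]
    have : (ℙ : Measure Ω)[(Y i) ^ 2] = γ := by
      rw [show (Y i) ^ 2 = fun ω => Y i ω ^ 2 from rfl, hYsq i, hEY i]
    rw [this, hEY i]
  -- pairwise independence of the Y i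
  have hYindep : Set.Pairwise ↑(Finset.univ : Finset (Fin n))
      (fun i j => IndepFun (Y i) (Y j) ℙ) := by
    intro i _ j _ hij
    have h := hindep.indepFun hij
    have hg : Measurable (fun b : Bool => if b then (1 : ℝ) else 0) := measurable_from_top
    exact h.comp hg hg
  have hVarSum : variance (∑ i, Y i) ℙ = (n : ℝ) * (γ - γ ^ 2) := by
    rw [IndepFun.variance_sum (fun i _ => hYmem i) hYindep]
    simp [hVarY, Finset.sum_const, mul_comm]
    ring
  -- rewrite the estimator
  set A : ℝ := (d : ℝ) * (c : ℝ) / ((n : ℝ) * (c : ℝ) * (p - q)) with hA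
  set B : ℝ := -((n : ℝ) * (q * (c : ℝ) + (p - q) * ((d : ℝ) - 1) + q * (c : ℝ) * ((d : ℝ) - 1)))
      / ((n : ℝ) * (c : ℝ) * (p - q)) with hB
  have hfun : (fun ω =>
        ((∑ i, if X i ω then (1 : ℝ) else 0) * (d : ℝ) * (c : ℝ)
          - (n : ℝ) * (q * (c : ℝ) + (p - q) * ((d : ℝ) - 1) + q * (c : ℝ) * ((d : ℝ) - 1)))
          / ((n : ℝ) * (c : ℝ) * (p - q)))
      = fun ω => A * ((∑ i, Y i) ω) + B := by
    funext ω
    simp only [hA, hB, Finset.sum_apply, hY]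
    ring
  rw [hfun]
  have hSmem : MemLp (∑ i, Y i) 2 ℙ := memLp_finset_sum' _ (fun i _ => hYmem i)
  have hint : Integrable (fun ω => A * ((∑ i, Y i) ω)) ℙ :=
    ((hSmem.const_mul A).integrable (by norm_num))
  rw [my_variance_add_const _ hint B, variance_const_mul, hVarSum]
  rw [hA]
  field_simp
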